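/- Let p be a prime number, let A be a commutative ring with p·1 = 0, and let λ, ν ∈ A. For μ ∈ A, let ⋆_μ denote the group operation on A × A given by (u₁,u₂) ⋆_μ (v₁,v₂) = (u₁+v₁, u₂+v₂+μ·Σ_{k=1}^{p−1} c_k u₁^k v₁^{p−k}) with c_k = binom(p,k)/p. Then the map φ_{λ,ν} : A × A → A × A defined by φ_{λ,ν}(u₁,u₂) = (u₁^p − νu₁, u₂^p − ν^p λ^{p−1} u₂ + λ^p Σ_{k=1}^{p−1} c_k u₁^{pk}(−νu₁)^{p−k}) is a group homomorphism from (A × A, ⋆_λ) to (A × A, ⋆_{λ^p}). -/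

import Mathlib

open Finset

section WittAux

variable {B : Type*} [CommRing B]

/-- The Witt cocycle sum `W(x,y) = ∑_{0<k<p} (C(p,k)/p) x^k y^{p-k}`. -/
def wittW (p : ℕ) (x y : B) : B :=
  ∑ k ∈ Finset.Ioo 0 p, (p.choose k / p : ℕ) * x ^ k * y ^ (p - k)

/-- Master identity: `(x+y)^p = x^p + y^p + p * W(x,y)` over any commutative ring. -/
lemma wittW_master (p : ℕ) (hp : p.Prime) (x y : B) :
    (x + y) ^ p = x ^ p + y ^ p + p * wittW p x y := by
  have h1 : (p : B) * wittW p x y =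
      ∑ k ∈ Finset.Ioo 0 p, x ^ k * y ^ (p - k) * (p.choose k : B) := by
    rw [wittW, Finset.mul_sum]
    refine Finset.sum_congr rfl fun k hk => ?_
    rw [Finset.mem_Ioo] at hk
    have hd : p ∣ p.choose k := Nat.Prime.dvd_choose_self hp hk.1.ne' hk.2
    have : (p * (p.choose k / p) : ℕ) = p.choose k := Nat.mul_div_cancel' hd
    calc (p : B) * ((p.choose k / p : ℕ) * x ^ k * y ^ (p - k))
        = ((p * (p.choose k / p) : ℕ) : B) * (x ^ k * y ^ (p - k)) := by push_cast; ring
      _ = x ^ k * y ^ (p - k) * (p.choose k : B) := by rw [this]; ring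
  rw [add_pow, h1]
  rw [Finset.sum_range_succ, ← Finset.Ico_add_one_left_eq_Ioo, Finset.range_eq_Ico,
    Finset.sum_eq_sum_Ico_succ_bot hp.pos]
  simp [Nat.sub_self]
  ring

/-- The combination of Witt cocycle sums expressing the obstruction for `φ` being a hom. -/
def wittD (p : ℕ) (a b n : B) : B :=
  wittW p (a ^ p) (b ^ p) - n ^ p * wittW p a b
    + wittW p ((a + b) ^ p) (-(n * (a + b)))
    - wittW p (a ^ p) (-(n * a)) - wittW p (b ^ p) (-(n * b))
    - wittW p (a ^ p - n * a) (b ^ p - n * b)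

lemma wittD_dvd (p : ℕ) (hp : p.Prime) (a b n : B) :
    ((p : B)) ^ 2 ∣ (p : B) * wittD p a b n := by
  have hstar : (p : B) * wittD p a b n =
      (p : B) * (wittW p ((a + b) ^ p) (-(n * (a + b)))
          - wittW p (a ^ p + b ^ p) (-(n * (a + b))))
        - n ^ p * ((p : B) * wittW p a b)
        - (p : B) * wittW p (-(n * a)) (-(n * b)) := by
    have M1 := wittW_master p hp (a ^ p) (b ^ p)
    have M4 := wittW_master p hp (a ^ p) (-(n * a))
    have M5 := wittW_master p hp (b ^ p) (-(n * b))
    have M6 := wittW_master p hp (a ^ p - n * a) (b ^ p - n * b)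
    have M7 := wittW_master p hp (a ^ p + b ^ p) (-(n * (a + b)))
    have M8 := wittW_master p hp (-(n * a)) (-(n * b))
    rw [wittD]
    linear_combination (-1 : B) * M1 + M4 + M5 + M6 - M7 - M8
  have hXY : (p : B) ∣ (a + b) ^ p - (a ^ p + b ^ p) :=
    ⟨wittW p a b, by linear_combination wittW_master p hp a b⟩
  have h37 : (p : B) ∣ wittW p ((a + b) ^ p) (-(n * (a + b)))
      - wittW p (a ^ p + b ^ p) (-(n * (a + b))) := by
    rw [wittW, wittW, ← Finset.sum_sub_distrib]
    refine Finset.dvd_sum fun k hk => ?_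
    have h2 : (p : B) ∣ ((a + b) ^ p) ^ k - (a ^ p + b ^ p) ^ k :=
      hXY.trans (sub_dvd_pow_sub_pow _ _ k)
    have : (p.choose k / p : ℕ) * ((a + b) ^ p) ^ k * (-(n * (a + b))) ^ (p - k)
        - (p.choose k / p : ℕ) * ((a ^ p + b ^ p)) ^ k * (-(n * (a + b))) ^ (p - k)
        = (((a + b) ^ p) ^ k - (a ^ p + b ^ p) ^ k)
          * ((p.choose k / p : ℕ) * (-(n * (a + b))) ^ (p - k)) := by ring
    rw [this]
    exact h2.mul_right _
  have h8 : (p : B) ∣ n ^ p * wittW p a b + wittW p (-(n * a)) (-(n * b)) := by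
    rcases hp.eq_two_or_odd' with h2 | hodd
    · subst h2
      have : Finset.Ioo 0 2 = {1} := rfl
      rw [wittW, wittW, this]
      simp only [Finset.sum_singleton]
      norm_num
      exact ⟨n ^ 2 * (a * b), by ring⟩
    · have : wittW p (-(n * a)) (-(n * b)) = -(n ^ p * wittW p a b) := by
        rw [wittW, wittW, Finset.mul_sum, ← Finset.sum_neg_distrib]
        refine Finset.sum_congr rfl fun k hk => ?_
        rw [Finset.mem_Ioo] at hk
        have hkp : k + (p - k) = p := Nat.add_sub_cancel' hk.2.le
        have e1 : (-1 : B) ^ k * (-1) ^ (p - k) = -1 := by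
          rw [← pow_add, hkp, hodd.neg_one_pow]
        have e2 : n ^ k * n ^ (p - k) = n ^ p := by rw [← pow_add, hkp]
        have f1 : (-(n * a)) ^ k = (-1 : B) ^ k * (n ^ k * a ^ k) := by
          rw [show -(n * a) = (-1 : B) * (n * a) by ring, mul_pow, mul_pow]
        have f2 : (-(n * b)) ^ (p - k) = (-1 : B) ^ (p - k) * (n ^ (p - k) * b ^ (p - k)) := by
          rw [show -(n * b) = (-1 : B) * (n * b) by ring, mul_pow, mul_pow]
        calc (p.choose k / p : ℕ) * (-(n * a)) ^ k * (-(n * b)) ^ (p - k)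
            = ((-1 : B) ^ k * (-1) ^ (p - k)) * (n ^ k * n ^ (p - k))
              * ((p.choose k / p : ℕ) * a ^ k * b ^ (p - k)) := by
              rw [f1, f2]; ring
          _ = -(n ^ p * ((p.choose k / p : ℕ) * a ^ k * b ^ (p - k))) := by
              rw [e1, e2]; ring
      rw [this]
      simp
  obtain ⟨q1, hq1⟩ := h37
  obtain ⟨q2, hq2⟩ := h8
  exact ⟨q1 - q2, by linear_combination hstar + (p : B) * hq1 - (p : B) * hq2⟩

lemma map_wittW {B' : Type*} [CommRing B'] (g : B →+* B') (p : ℕ) (x y : B) :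
    g (wittW p x y) = wittW p (g x) (g y) := by
  simp [wittW]

lemma map_wittD {B' : Type*} [CommRing B'] (g : B →+* B') (p : ℕ) (a b n : B) :
    g (wittD p a b n) = wittD p (g a) (g b) (g n) := by
  simp [wittD, map_wittW]

lemma wittD_exists (p : ℕ) (hp : p.Prime) :
    ∃ Q : MvPolynomial (Fin 3) ℤ,
      wittD p (MvPolynomial.X 0) (MvPolynomial.X 1) (MvPolynomial.X 2)
        = (p : MvPolynomial (Fin 3) ℤ) * Q := by
  set R := MvPolynomial (Fin 3) ℤ
  obtain ⟨E, hE⟩ := wittD_dvd p hp (MvPolynomial.X 0 : R) (MvPolynomial.X 1) (MvPolynomial.X 2)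
  refine ⟨E, ?_⟩
  have hp0 : ((p : R)) ≠ 0 := Nat.cast_ne_zero.mpr hp.ne_zero
  have h : (p : R) * (wittD p (MvPolynomial.X 0) (MvPolynomial.X 1) (MvPolynomial.X 2)
      - (p : R) * E) = 0 := by linear_combination hE
  rcases mul_eq_zero.mp h with h' | h'
  · exact absurd h' hp0
  · exact sub_eq_zero.mp h'

lemma wittD_eq_zero {A : Type*} [CommRing A] (p : ℕ) (hp : p.Prime)
    (hchar : (p : A) = 0) (a b n : A) : wittD p a b n = 0 := by
  obtain ⟨Q, hQ⟩ := wittD_exists p hp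
  let g : MvPolynomial (Fin 3) ℤ →+* A := (MvPolynomial.aeval ![a, b, n]).toRingHom
  have := congrArg g hQ
  rw [map_wittD, map_mul, map_natCast, hchar, zero_mul] at this
  simpa [g, MvPolynomial.aeval_X] using this

variable {A : Type*} [CommRing A]

lemma frob_add (p : ℕ) (hp : p.Prime) (hchar : (p : A) = 0) (x y : A) :
    (x + y) ^ p = x ^ p + y ^ p := by
  rw [wittW_master p hp, hchar, zero_mul, add_zero]

lemma frob_sum (p : ℕ) (hp : p.Prime) (hchar : (p : A) = 0)
    {ι : Type*} (s : Finset ι) (f : ι → A) :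
    (∑ i ∈ s, f i) ^ p = ∑ i ∈ s, f i ^ p := by
  induction s using Finset.cons_induction with
  | empty => simp [zero_pow hp.ne_zero]
  | cons i s hi ih =>
      rw [Finset.sum_cons, Finset.sum_cons, frob_add p hp hchar, ih]

lemma cast_pow_p (p : ℕ) (hp : p.Prime) (hchar : (p : A) = 0) (c : ℕ) :
    (c : A) ^ p = (c : A) := by
  haveI : Fact p.Prime := ⟨hp⟩
  have h : (p : ℤ) ∣ (c : ℤ) ^ p - c := by
    rw [← ZMod.intCast_zmod_eq_zero_iff_dvd]
    push_cast
    rw [ZMod.pow_card]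
    ring
  obtain ⟨m, hm⟩ := h
  have h2 := congrArg (fun t : ℤ => (t : A)) hm
  push_cast at h2
  rw [hchar, zero_mul] at h2
  linear_combination h2

lemma wittW_pow (p : ℕ) (hp : p.Prime) (hchar : (p : A) = 0) (x y : A) :
    wittW p x y ^ p = wittW p (x ^ p) (y ^ p) := by
  rw [wittW, frob_sum p hp hchar, wittW]
  refine Finset.sum_congr rfl fun k hk => ?_
  rw [mul_pow, mul_pow, cast_pow_p p hp hchar, ← pow_mul, ← pow_mul,
    mul_comm k p, mul_comm (p - k) p, pow_mul, pow_mul]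

end WittAux

/-- The group law of the twisted Witt group `W₂^μ`. -/
def wittOp (p : ℕ) {A : Type*} [CommRing A] (mu : A) (u v : A × A) : A × A :=
  (u.1 + v.1,
    u.2 + v.2 + mu * ∑ k ∈ Finset.Ioo 0 p, (p.choose k / p : ℕ) * u.1 ^ k * v.1 ^ (p - k))

/-- The twisted Artin–Schreier–Witt isogeny `φ_{λ,ν} = F_λ − I^ν_{λ,λ^{p−1}}`. -/
def wittIsogeny (p : ℕ) {A : Type*} [CommRing A] (lam nu : A) (u : A × A) : A × A :=
  (u.1 ^ p - nu * u.1,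
    u.2 ^ p - nu ^ p * lam ^ (p - 1) * u.2 +
      lam ^ p * ∑ k ∈ Finset.Ioo 0 p,
        (p.choose k / p : ℕ) * u.1 ^ (p * k) * (-(nu * u.1)) ^ (p - k))

/-- If `p` is prime, `A` is a commutative ring with `p·1 = 0`
and `λ, ν ∈ A`, then `φ_{λ,ν}` is a group homomorphism from `(A × A, ⋆_λ)` to
`(A × A, ⋆_{λ^p})`. -/
theorem stmt18 (p : ℕ) (hp : p.Prime) {A : Type*} [CommRing A]
    (hchar : (p : A) = 0) (lam nu : A) :
    ∀ x y : A × A,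
      wittIsogeny p lam nu (wittOp p lam x y) =
        wittOp p (lam ^ p) (wittIsogeny p lam nu x) (wittIsogeny p lam nu y) := by
  intro x y
  have hsumW : ∀ u v : A, (∑ k ∈ Finset.Ioo 0 p,
      (p.choose k / p : ℕ) * u ^ k * v ^ (p - k)) = wittW p u v := fun u v => rfl
  refine Prod.ext ?_ ?_
  · show (x.1 + y.1) ^ p - nu * (x.1 + y.1) =
      (x.1 ^ p - nu * x.1) + (y.1 ^ p - nu * y.1)
    linear_combination wittW_master p hp x.1 y.1 + wittW p x.1 y.1 * hchar
  · show (x.2 + y.2 + lam * ∑ k ∈ Finset.Ioo 0 p,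
        (p.choose k / p : ℕ) * x.1 ^ k * y.1 ^ (p - k)) ^ p
      - nu ^ p * lam ^ (p - 1) * (x.2 + y.2 + lam * ∑ k ∈ Finset.Ioo 0 p,
        (p.choose k / p : ℕ) * x.1 ^ k * y.1 ^ (p - k))
      + lam ^ p * ∑ k ∈ Finset.Ioo 0 p,
        (p.choose k / p : ℕ) * (x.1 + y.1) ^ (p * k) * (-(nu * (x.1 + y.1))) ^ (p - k)
      = (x.2 ^ p - nu ^ p * lam ^ (p - 1) * x.2 +
          lam ^ p * ∑ k ∈ Finset.Ioo 0 p,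
            (p.choose k / p : ℕ) * x.1 ^ (p * k) * (-(nu * x.1)) ^ (p - k))
        + (y.2 ^ p - nu ^ p * lam ^ (p - 1) * y.2 +
          lam ^ p * ∑ k ∈ Finset.Ioo 0 p,
            (p.choose k / p : ℕ) * y.1 ^ (p * k) * (-(nu * y.1)) ^ (p - k))
        + lam ^ p * ∑ k ∈ Finset.Ioo 0 p,
            (p.choose k / p : ℕ) * (x.1 ^ p - nu * x.1) ^ k * (y.1 ^ p - nu * y.1) ^ (p - k)
    simp only [pow_mul, hsumW]
    have hF2 : (x.2 + y.2 + lam * wittW p x.1 y.1) ^ p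
        = x.2 ^ p + y.2 ^ p + lam ^ p * wittW p x.1 y.1 ^ p := by
      rw [frob_add p hp hchar, frob_add p hp hchar, mul_pow]
    have hWp := wittW_pow p hp hchar x.1 y.1
    have hD := wittD_eq_zero p hp hchar x.1 y.1 nu
    rw [wittD] at hD
    have hlam : lam ^ (p - 1) * lam = lam ^ p := by
      rw [← pow_succ, Nat.sub_add_cancel hp.one_le]
    linear_combination hF2 + lam ^ p * hWp + lam ^ p * hD
      - (nu ^ p * wittW p x.1 y.1) * hlam
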